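/- Knill-Laflamme theorem (quantum error correction conditions): let P be a d×d complex orthogonal projection matrix (P† = P, P² = P) and let (E_j)_{j∈J} be a finite family of d×d complex matrices with Σ_j E_j† E_j = I. Then there exists a finite family (R_i)_{i∈K} of d×d complex matrices with Σ_i R_i† R_i = I such that Σ_{i,j} R_i E_j ρ E_j† R_i† = ρ for every d×d complex matrix ρ with P ρ P = ρ, if and only if there exists a Hermitian matrix of complex numbers α = (α_{jk}) (i.e. α_{jk} = conj(α_{kj})) such that P E_j† E_k P = α_{jk} P for all j, k ∈ J. -/

import Mathlib

open Matrix

namespace KLaux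

variable {d : ℕ}

lemma ext_mulVec {M N : Matrix (Fin d) (Fin d) ℂ} (h : ∀ x, M *ᵥ x = N *ᵥ x) : M = N := by
  ext i j
  have := congrFun (h (Pi.single j 1)) i
  simpa [Matrix.mulVec_single] using this

lemma mul_vecMulVec (M : Matrix (Fin d) (Fin d) ℂ) (v w : Fin d → ℂ) :
    M * vecMulVec v w = vecMulVec (M *ᵥ v) w := by
  ext i j
  simp [Matrix.mul_apply, Matrix.vecMulVec_apply, Matrix.mulVec, dotProduct,
    Finset.sum_mul, mul_assoc]

lemma vecMulVec_mul (v w : Fin d → ℂ) (M : Matrix (Fin d) (Fin d) ℂ) :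
    vecMulVec v w * M = vecMulVec v (w ᵥ* M) := by
  ext i j
  simp [Matrix.mul_apply, Matrix.vecMulVec_apply, Matrix.vecMul, dotProduct,
    Finset.mul_sum, mul_assoc]

lemma vecMulVec_mulVec (v w x : Fin d → ℂ) :
    vecMulVec v w *ᵥ x = (w ⬝ᵥ x) • v := by
  ext i
  simp only [Matrix.mulVec, Matrix.vecMulVec_apply, dotProduct, Pi.smul_apply,
    smul_eq_mul, Finset.sum_mul, Finset.mul_sum]
  exact Finset.sum_congr rfl fun k _ => by ring

lemma smul_vec_cancel {v : Fin d → ℂ} (hv : v ≠ 0) {c c' : ℂ} (h : c • v = c' • v) : c = c' := by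
  have : (c - c') • v = 0 := by rw [sub_smul, h, sub_self]
  rcases smul_eq_zero.mp this with h' | h'
  · exact sub_eq_zero.mp h'
  · exact absurd h' hv

lemma smul_mat_cancel {P : Matrix (Fin d) (Fin d) ℂ} (hP : P ≠ 0) {c c' : ℂ}
    (h : c • P = c' • P) : c = c' := by
  have : (c - c') • P = 0 := by rw [sub_smul, h, sub_self]
  rcases smul_eq_zero.mp this with h' | h'
  · exact sub_eq_zero.mp h'
  · exact absurd h' hP

lemma sum_mulVec {ι : Type*} [Fintype ι] (M : ι → Matrix (Fin d) (Fin d) ℂ) (v : Fin d → ℂ) :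
    (∑ p, M p) *ᵥ v = ∑ p, M p *ᵥ v := by
  ext i
  simp only [Matrix.mulVec, dotProduct, Matrix.sum_apply, Finset.sum_apply,
    Finset.sum_mul]
  rw [Finset.sum_comm]

lemma dotProduct_sum' {ι : Type*} [Fintype ι] (v : Fin d → ℂ) (f : ι → Fin d → ℂ) :
    v ⬝ᵥ (∑ p, f p) = ∑ p, v ⬝ᵥ f p := by
  simp [dotProduct, Finset.mul_sum]
  rw [Finset.sum_comm]

lemma star_dot_self_eq_zero {v : Fin d → ℂ} (h : star v ⬝ᵥ v = 0) : v = 0 := by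
  have h' : ∑ i, Complex.normSq (v i) = 0 := by
    have : ((∑ i, Complex.normSq (v i) : ℝ) : ℂ) = 0 := by
      push_cast
      rw [← h]
      refine Finset.sum_congr rfl fun i _ => ?_
      rw [Complex.normSq_eq_conj_mul_self]
      rfl
    exact_mod_cast this
  funext i
  have := (Finset.sum_eq_zero_iff_of_nonneg (fun i _ => Complex.normSq_nonneg (v i))).mp h' i
    (Finset.mem_univ i)
  simpa using Complex.normSq_eq_zero.mp this

lemma sum_mul_star_eq_zero {ι : Type*} [Fintype ι] {a : ι → ℂ}
    (h : ∑ p, a p * star (a p) = 0) (p : ι) : a p = 0 := by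
  have h' : ∑ p, Complex.normSq (a p) = 0 := by
    have : ((∑ p, Complex.normSq (a p) : ℝ) : ℂ) = 0 := by
      push_cast
      rw [← h]
      exact Finset.sum_congr rfl fun p _ => (Complex.mul_conj (a p)).symm
    exact_mod_cast this
  have := (Finset.sum_eq_zero_iff_of_nonneg (fun p _ => Complex.normSq_nonneg (a p))).mp h' p
    (Finset.mem_univ p)
  exact Complex.normSq_eq_zero.mp this

/-- Frobenius norm squared -/
noncomputable def trN (M : Matrix (Fin d) (Fin d) ℂ) : ℝ := ∑ i, ∑ j, Complex.normSq (M i j)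

lemma trace_conjTranspose_mul (M : Matrix (Fin d) (Fin d) ℂ) :
    (Mᴴ * M).trace = (trN M : ℂ) := by
  rw [Matrix.trace]
  push_cast [trN]
  rw [Finset.sum_comm]
  refine Finset.sum_congr rfl fun i _ => ?_
  rw [Matrix.diag_apply, Matrix.mul_apply]
  refine Finset.sum_congr rfl fun j _ => ?_
  rw [Matrix.conjTranspose_apply, Complex.normSq_eq_conj_mul_self]
  rfl

lemma trN_nonneg (M : Matrix (Fin d) (Fin d) ℂ) : 0 ≤ trN M :=
  Finset.sum_nonneg fun i _ => Finset.sum_nonneg fun j _ => Complex.normSq_nonneg _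

lemma trN_eq_zero_iff {M : Matrix (Fin d) (Fin d) ℂ} : trN M = 0 ↔ M = 0 := by
  constructor
  · intro h
    ext i j
    have h1 := (Finset.sum_eq_zero_iff_of_nonneg
      (fun i _ => Finset.sum_nonneg fun j _ => Complex.normSq_nonneg (M i j))).mp h i
      (Finset.mem_univ i)
    have h2 := (Finset.sum_eq_zero_iff_of_nonneg
      (fun j _ => Complex.normSq_nonneg (M i j))).mp h1 j (Finset.mem_univ j)
    simpa using Complex.normSq_eq_zero.mp h2
  · intro h; simp [h, trN]

lemma eq_zero_of_conjTranspose_mul_self {M : Matrix (Fin d) (Fin d) ℂ}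
    (h : Mᴴ * M = 0) : M = 0 := by
  have h1 := congrArg Matrix.trace h
  rw [trace_conjTranspose_mul] at h1
  simp only [Matrix.trace_zero] at h1
  exact trN_eq_zero_iff.mp (by exact_mod_cast h1)

lemma kraus_scalar {ι : Type*} [Fintype ι] {P : Matrix (Fin d) (Fin d) ℂ}
    (hP₁ : Pᴴ = P)
    {K : ι → Matrix (Fin d) (Fin d) ℂ}
    (hK : ∀ ρ, P * ρ * P = ρ → ∑ p, K p * ρ * (K p)ᴴ = ρ)
    {v : Fin d → ℂ} (hv : P *ᵥ v = v) (hv0 : v ≠ 0) (p₀ : ι) :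
    ∃ c : ℂ, K p₀ *ᵥ v = c • v := by
  set ρ := vecMulVec v (star v) with hρdef
  have hstarvP : star v ᵥ* P = star v := by
    conv_lhs => rw [← hP₁]
    rw [← star_mulVec, hv]
  have hρ : P * ρ * P = ρ := by
    rw [hρdef, mul_vecMulVec, hv, vecMulVec_mul, hstarvP]
  have hvv : star v ⬝ᵥ v ≠ 0 := fun h => hv0 (star_dot_self_eq_zero h)
  set c₀ : ℂ := (star v ⬝ᵥ (K p₀ *ᵥ v)) / (star v ⬝ᵥ v) with hc₀
  set w : Fin d → ℂ := K p₀ *ᵥ v - c₀ • v with hw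
  have horth : star v ⬝ᵥ w = 0 := by
    rw [hw, dotProduct_sub, dotProduct_smul, hc₀, smul_eq_mul,
      div_mul_cancel₀ _ hvv, sub_self]
  have horth' : star w ⬝ᵥ v = 0 := by
    have h := horth
    rw [star_dotProduct] at h
    exact star_eq_zero.mp h
  have hterm : ∀ p : ι, star w ⬝ᵥ ((K p * ρ * (K p)ᴴ) *ᵥ w)
      = (star w ⬝ᵥ (K p *ᵥ v)) * star (star w ⬝ᵥ (K p *ᵥ v)) := by
    intro p
    have h1 : K p * ρ * (K p)ᴴ = vecMulVec (K p *ᵥ v) (star (K p *ᵥ v)) := by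
      rw [hρdef, mul_vecMulVec, vecMulVec_mul, star_mulVec]
    rw [h1, vecMulVec_mulVec, dotProduct_smul, smul_eq_mul, mul_comm]
    congr 1
    rw [star_dotProduct]
  have hRHS : star w ⬝ᵥ (ρ *ᵥ w) = 0 := by
    rw [hρdef, vecMulVec_mulVec, horth, zero_smul, dotProduct_zero]
  have key : ∑ p, (star w ⬝ᵥ (K p *ᵥ v)) * star (star w ⬝ᵥ (K p *ᵥ v)) = 0 := by
    have hsum := congrArg (fun M => star w ⬝ᵥ (M *ᵥ w)) (hK ρ hρ)
    simp only [sum_mulVec, dotProduct_sum'] at hsum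
    calc ∑ p, (star w ⬝ᵥ (K p *ᵥ v)) * star (star w ⬝ᵥ (K p *ᵥ v))
        = ∑ p, star w ⬝ᵥ ((K p * ρ * (K p)ᴴ) *ᵥ w) :=
          Finset.sum_congr rfl fun p _ => (hterm p).symm
      _ = star w ⬝ᵥ (ρ *ᵥ w) := hsum
      _ = 0 := hRHS
  have h0 : star w ⬝ᵥ (K p₀ *ᵥ v) = 0 := sum_mul_star_eq_zero key p₀
  have hKv : K p₀ *ᵥ v = w + c₀ • v := by rw [hw, sub_add_cancel]
  rw [hKv, dotProduct_add, dotProduct_smul, smul_eq_mul, horth', mul_zero, add_zero] at h0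
  have hw0 : w = 0 := star_dot_self_eq_zero h0
  refine ⟨c₀, ?_⟩
  rw [hKv, hw0, zero_add]

end KLaux

open KLaux

/-- **Knill–Laflamme theorem (quantum error correction conditions)**: let `P` be a `d×d`
complex orthogonal projection and `(E_j)` a finite trace-preserving Kraus family.  There
exists a finite trace-preserving recovery family `(R_i)` with
`Σ_{i,j} R_i E_j ρ E_j† R_i† = ρ` for every `ρ` with `PρP = ρ`, if and only if there exists
a Hermitian matrix `α` of complex numbers with `P E_j† E_k P = α_{jk} P` for all `j, k`. -/
theorem knill_laflamme {d : ℕ} {J : Type} [Fintype J]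
    (P : Matrix (Fin d) (Fin d) ℂ) (hP₁ : Pᴴ = P) (hP₂ : P * P = P)
    (E : J → Matrix (Fin d) (Fin d) ℂ)
    (hE : ∑ j, (E j)ᴴ * E j = 1) :
    (∃ (m : ℕ) (R : Fin m → Matrix (Fin d) (Fin d) ℂ),
        (∑ i, (R i)ᴴ * R i = 1) ∧
        ∀ ρ : Matrix (Fin d) (Fin d) ℂ, P * ρ * P = ρ →
          ∑ i, ∑ j, R i * E j * ρ * (E j)ᴴ * (R i)ᴴ = ρ) ↔
    (∃ α : J → J → ℂ, (∀ j k, α j k = star (α k j)) ∧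
        ∀ j k, P * (E j)ᴴ * E k * P = α j k • P) := by
  constructor
  · rintro ⟨m, R, hR1, hRrec⟩
    by_cases hP0 : P = 0
    · exact ⟨fun _ _ => 0, fun j k => by simp, fun j k => by simp [hP0]⟩
    · set K : Fin m × J → Matrix (Fin d) (Fin d) ℂ := fun p => R p.1 * E p.2 with hKdef
      have hK : ∀ ρ, P * ρ * P = ρ → ∑ p, K p * ρ * (K p)ᴴ = ρ := by
        intro ρ hρ
        have hstep : ∑ p, K p * ρ * (K p)ᴴ = ∑ i, ∑ j, R i * E j * ρ * (E j)ᴴ * (R i)ᴴ := by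
          rw [Fintype.sum_prod_type]
          refine Finset.sum_congr rfl fun i _ => Finset.sum_congr rfl fun j _ => ?_
          simp only [hKdef, conjTranspose_mul, Matrix.mul_assoc]
        rw [hstep]
        exact hRrec ρ hρ
      have hex : ∃ v₀ : Fin d → ℂ, P *ᵥ v₀ = v₀ ∧ v₀ ≠ 0 := by
        by_contra h
        push_neg at h
        apply hP0
        apply ext_mulVec (N := 0)
        intro x
        rw [Matrix.zero_mulVec]
        by_contra hx
        have hfix : P *ᵥ (P *ᵥ x) = P *ᵥ x := by
          rw [Matrix.mulVec_mulVec, hP₂]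
        exact hx (h (P *ᵥ x) hfix)
      obtain ⟨v₀, hv₀, hv₀0⟩ := hex
      choose c hc using fun p => kraus_scalar hP₁ hK hv₀ hv₀0 p
      have hKP : ∀ p, K p * P = c p • P := by
        intro p
        apply ext_mulVec
        intro x
        rw [← Matrix.mulVec_mulVec, smul_mulVec]
        set u := P *ᵥ x with hu
        have hPu : P *ᵥ u = u := by rw [hu, Matrix.mulVec_mulVec, hP₂]
        by_cases hu0 : u = 0
        · rw [hu0]; simp
        · obtain ⟨c', hc'⟩ := kraus_scalar hP₁ hK hPu hu0 p
          rw [hc']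
          congr 1
          by_cases hvu : v₀ + u = 0
          · have huv : u = -v₀ := by
              rw [eq_neg_iff_add_eq_zero, add_comm]; exact hvu
            have h1 : K p *ᵥ u = c p • u := by
              rw [huv, Matrix.mulVec_neg, hc p, smul_neg]
            exact smul_vec_cancel hu0 (hc'.symm.trans h1)
          · have hPvu : P *ᵥ (v₀ + u) = v₀ + u := by rw [Matrix.mulVec_add, hv₀, hPu]
            obtain ⟨c'', hc''⟩ := kraus_scalar hP₁ hK hPvu hvu p
            have heq : c p • v₀ + c' • u = c'' • v₀ + c'' • u := by
              rw [← smul_add, ← hc'', Matrix.mulVec_add, hc p, hc']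
            by_cases h2 : c'' = c p
            · rw [h2] at heq
              exact smul_vec_cancel hu0 (add_left_cancel heq)
            · have hne : c p - c'' ≠ 0 := sub_ne_zero.mpr fun h => h2 h.symm
              have ht : (c p - c'') • v₀ = (c'' - c') • u := by
                rw [sub_smul, sub_smul, sub_eq_sub_iff_add_eq_add, heq, add_comm]
              have hv₀u : v₀ = ((c p - c'')⁻¹ * (c'' - c')) • u := by
                rw [mul_smul, ← ht, smul_smul, inv_mul_cancel₀ hne, one_smul]
              have h4 : c p • v₀ = c' • v₀ := by
                calc c p • v₀ = K p *ᵥ v₀ := (hc p).symm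
                  _ = ((c p - c'')⁻¹ * (c'' - c')) • (K p *ᵥ u) := by
                      rw [hv₀u, Matrix.mulVec_smul]
                  _ = ((c p - c'')⁻¹ * (c'' - c')) • (c' • u) := by rw [hc']
                  _ = c' • (((c p - c'')⁻¹ * (c'' - c')) • u) := by
                      rw [smul_smul, smul_smul, mul_comm]
                  _ = c' • v₀ := by rw [← hv₀u]
              exact smul_vec_cancel hv₀0 h4.symm
      refine ⟨fun j k => ∑ i, star (c (i, j)) * c (i, k), ?_, ?_⟩
      · intro j k
        rw [star_sum]
        refine Finset.sum_congr rfl fun i _ => ?_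
        rw [StarMul.star_mul, star_star, mul_comm]
      · intro j k
        have h1 : ∑ i, (K (i, j) * P)ᴴ * (K (i, k) * P) = P * (E j)ᴴ * E k * P := by
          have hterm : ∀ i : Fin m, (K (i, j) * P)ᴴ * (K (i, k) * P)
              = P * (E j)ᴴ * ((R i)ᴴ * R i) * (E k * P) := by
            intro i
            simp only [hKdef, conjTranspose_mul, hP₁, Matrix.mul_assoc]
          rw [Finset.sum_congr rfl fun i _ => hterm i]
          have h2 : ∑ i : Fin m, P * (E j)ᴴ * ((R i)ᴴ * R i) * (E k * P)
              = (P * (E j)ᴴ * (∑ i, (R i)ᴴ * R i)) * (E k * P) := by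
            rw [Matrix.mul_sum, Matrix.sum_mul]
          rw [h2, hR1, Matrix.mul_one, ← Matrix.mul_assoc]
        rw [← h1, Finset.sum_smul]
        refine Finset.sum_congr rfl fun i _ => ?_
        rw [hKP, hKP, conjTranspose_smul, Matrix.smul_mul, Matrix.mul_smul, smul_smul,
          hP₁, hP₂]
  · rintro ⟨α, hαh, hcond⟩
    by_cases hP0 : P = 0
    · refine ⟨1, fun _ => 1, by simp, ?_⟩
      intro ρ hρ
      have hρ0 : ρ = 0 := by rw [← hρ, hP0]; simp
      simp [hρ0]
    · classical
      set A : Matrix J J ℂ := Matrix.of α with hAdef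
      have hAapp : ∀ a b, A a b = α a b := fun a b => rfl
      have hAh : A.IsHermitian := by
        ext j k
        rw [conjTranspose_apply]
        exact (hαh j k).symm
      set U : Matrix J J ℂ := (hAh.eigenvectorUnitary : Matrix J J ℂ) with hUdef
      set ev : J → ℝ := hAh.eigenvalues with hevdef
      have hU2 : U * Uᴴ = 1 := by
        rw [← Matrix.star_eq_conjTranspose]
        exact mem_unitaryGroup_iff.mp hAh.eigenvectorUnitary.2
      have hdiag : Uᴴ * A * U = Matrix.diagonal fun j => ((ev j : ℝ) : ℂ) := by
        rw [← Matrix.star_eq_conjTranspose]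
        have := hAh.conjStarAlgAut_star_eigenvectorUnitary
        rw [Unitary.conjStarAlgAut_star_apply] at this
        exact this
      set F : J → Matrix (Fin d) (Fin d) ℂ := fun k => ∑ a, U a k • E a with hFdef
      set G : J → Matrix (Fin d) (Fin d) ℂ := fun k => F k * P with hGdef
      have hFH : ∀ k, (F k)ᴴ = ∑ a, star (U a k) • (E a)ᴴ := by
        intro k
        simp only [hFdef, conjTranspose_sum, conjTranspose_smul]
      have hUAU : ∀ j k, (Uᴴ * A * U) j k = ∑ a, ∑ b, (star (U a j) * U b k) * α a b := by
        intro j k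
        simp only [Matrix.mul_apply, Matrix.conjTranspose_apply, Finset.sum_mul]
        rw [Finset.sum_comm]
        refine Finset.sum_congr rfl fun a _ => Finset.sum_congr rfl fun b _ => ?_
        rw [hAapp]
        ring
      have hPF : ∀ j k, P * (F j)ᴴ * (F k * P) = ((Uᴴ * A * U) j k) • P := by
        intro j k
        have e2 : P * (F j)ᴴ * (F k * P)
            = ∑ a, ∑ b, ((star (U b j) * U a k) * α b a) • P := by
          rw [hFH j]
          simp only [hFdef, Matrix.mul_sum, Matrix.sum_mul, Matrix.smul_mul, Matrix.mul_smul,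
            Finset.smul_sum, smul_smul, Matrix.mul_assoc]
          refine Finset.sum_congr rfl fun a _ => Finset.sum_congr rfl fun b _ => ?_
          have hc := hcond b a
          rw [Matrix.mul_assoc, Matrix.mul_assoc] at hc
          rw [hc, smul_smul]
          congr 1
          ring
        rw [e2, Finset.sum_comm, hUAU, Finset.sum_smul]
        refine Finset.sum_congr rfl fun a _ => ?_
        rw [Finset.sum_smul]
      have hGc : ∀ j k, (G j)ᴴ * G k = (if j = k then ((ev j : ℝ) : ℂ) else 0) • P := by
        intro j k
        have e1 : (G j)ᴴ * G k = P * (F j)ᴴ * (F k * P) := by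
          simp only [hGdef, conjTranspose_mul, hP₁, Matrix.mul_assoc]
        rw [e1, hPF, hdiag, Matrix.diagonal_apply]
      have hGP : ∀ k, G k * P = G k := by
        intro k
        simp only [hGdef, Matrix.mul_assoc, hP₂]
      have hPGH : ∀ k, P * (G k)ᴴ = (G k)ᴴ := by
        intro k
        simp only [hGdef, conjTranspose_mul, hP₁]
        rw [← Matrix.mul_assoc, hP₂]
      have hFsum : ∑ k, (F k)ᴴ * F k = 1 := by
        have e : ∀ k, (F k)ᴴ * F k = ∑ a, ∑ b, (U a k * star (U b k)) • ((E b)ᴴ * E a) := by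
          intro k
          rw [hFH k]
          simp only [hFdef, Matrix.mul_sum, Matrix.sum_mul, Matrix.smul_mul, Matrix.mul_smul,
            Finset.smul_sum, smul_smul]
        calc ∑ k, (F k)ᴴ * F k
            = ∑ a, ∑ b, (∑ k, U a k * star (U b k)) • ((E b)ᴴ * E a) := by
              simp only [e]
              rw [Finset.sum_comm]
              refine Finset.sum_congr rfl fun a _ => ?_
              rw [Finset.sum_comm]
              refine Finset.sum_congr rfl fun b _ => ?_
              rw [Finset.sum_smul]
          _ = ∑ a, ∑ b, ((U * Uᴴ) a b) • ((E b)ᴴ * E a) := by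
              refine Finset.sum_congr rfl fun a _ => Finset.sum_congr rfl fun b _ => ?_
              congr 1
          _ = 1 := by
              rw [hU2, ← hE]
              refine Finset.sum_congr rfl fun a _ => ?_
              simp [Matrix.one_apply, ite_smul]
      have hPP : Pᴴ * P = P := by rw [hP₁, hP₂]
      have htrP : P.trace = (trN P : ℂ) := by
        conv_lhs => rw [← hPP]
        rw [trace_conjTranspose_mul]
      have htrPpos : 0 < trN P :=
        lt_of_le_of_ne (trN_nonneg P) fun h => hP0 (trN_eq_zero_iff.mp h.symm)
      have hGtr : ∀ k, trN (G k) = ev k * trN P := by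
        intro k
        have h2 := hGc k k
        rw [if_pos rfl] at h2
        have h3 := congrArg Matrix.trace h2
        rw [trace_conjTranspose_mul, Matrix.trace_smul, htrP, smul_eq_mul] at h3
        exact_mod_cast h3
      have hevnn : ∀ k, 0 ≤ ev k := by
        intro k
        nlinarith [trN_nonneg (G k), hGtr k, htrPpos]
      have hG0 : ∀ k, ¬ 0 < ev k → G k = 0 := by
        intro k hk
        have hev0 : ev k = 0 := le_antisymm (not_lt.mp hk) (hevnn k)
        apply eq_zero_of_conjTranspose_mul_self
        rw [hGc k k, if_pos rfl, hev0]
        simp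
      have hsum1 : ∑ k, ev k = 1 := by
        have h1 : ∑ k, P * ((F k)ᴴ * F k) * P = P := by
          have h2 : ∑ k, P * ((F k)ᴴ * F k) * P = P * (∑ k, (F k)ᴴ * F k) * P := by
            rw [Matrix.mul_sum, Matrix.sum_mul]
          rw [h2, hFsum, Matrix.mul_one, hP₂]
        have h3 : ∑ k, P * ((F k)ᴴ * F k) * P = ((∑ k, ev k : ℝ) : ℂ) • P := by
          calc ∑ k, P * ((F k)ᴴ * F k) * P = ∑ k, ((ev k : ℝ) : ℂ) • P := by
                refine Finset.sum_congr rfl fun k _ => ?_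
                have := hPF k k
                rw [hdiag, Matrix.diagonal_apply_eq] at this
                rw [← this]
                simp only [Matrix.mul_assoc]
            _ = ((∑ k, ev k : ℝ) : ℂ) • P := by
                rw [← Finset.sum_smul]
                congr 1
                push_cast
                rfl
        have h4 : ((∑ k, ev k : ℝ) : ℂ) • P = (1 : ℂ) • P := by
          rw [← h3, h1, one_smul]
        have h5 := smul_mat_cancel hP0 h4
        exact_mod_cast h5
      set Qk : J → Matrix (Fin d) (Fin d) ℂ :=
        fun k => if 0 < ev k then ((ev k : ℝ) : ℂ)⁻¹ • (G k * (G k)ᴴ) else 0 with hQkdef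
      set Q : Matrix (Fin d) (Fin d) ℂ := ∑ k, Qk k with hQdef
      set sq : J → ℂ := fun k => ((Real.sqrt (ev k) : ℝ) : ℂ)⁻¹ with hsqdef
      set Rop : Option J → Matrix (Fin d) (Fin d) ℂ :=
        fun o => Option.casesOn o (1 - Q) fun k => if 0 < ev k then sq k • (G k)ᴴ else 0
        with hRopdef
      have hevne : ∀ k, 0 < ev k → ((ev k : ℝ) : ℂ) ≠ 0 := by
        intro k hk
        simpa using ne_of_gt hk
      have hQkGk : ∀ l k, Qk l * G k = if l = k then G k else 0 := by
        intro l k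
        by_cases hl : 0 < ev l
        · rw [show Qk l = ((ev l : ℝ) : ℂ)⁻¹ • (G l * (G l)ᴴ) from if_pos hl]
          rw [Matrix.smul_mul, Matrix.mul_assoc, hGc l k]
          by_cases hlk : l = k
          · subst hlk
            rw [if_pos rfl, if_pos rfl, Matrix.mul_smul, hGP, smul_smul,
              inv_mul_cancel₀ (hevne l hl), one_smul]
          · rw [if_neg hlk, if_neg hlk, zero_smul, Matrix.mul_zero, smul_zero]
        · rw [show Qk l = 0 from if_neg hl, Matrix.zero_mul]
          by_cases hlk : l = k
          · subst hlk
            rw [if_pos rfl, hG0 l hl]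
          · rw [if_neg hlk]
      have hQG : ∀ k, Q * G k = G k := by
        intro k
        rw [hQdef, Matrix.sum_mul]
        rw [Finset.sum_congr rfl fun l _ => hQkGk l k]
        simp
      have h1QG : ∀ k, (1 - Q) * G k = 0 := by
        intro k
        rw [Matrix.sub_mul, Matrix.one_mul, hQG, sub_self]
      have hQkH : ∀ k, (Qk k)ᴴ = Qk k := by
        intro k
        by_cases hk : 0 < ev k
        · rw [show Qk k = ((ev k : ℝ) : ℂ)⁻¹ • (G k * (G k)ᴴ) from if_pos hk,
            conjTranspose_smul, conjTranspose_mul, conjTranspose_conjTranspose]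
          congr 1
          rw [star_inv₀, Complex.star_def, Complex.conj_ofReal]
        · rw [show Qk k = 0 from if_neg hk]
          simp
      have hQH : Qᴴ = Q := by
        rw [hQdef, conjTranspose_sum]
        exact Finset.sum_congr rfl fun k _ => hQkH k
      have hQkQk : ∀ l k, Qk l * Qk k = if l = k then Qk l else 0 := by
        intro l k
        by_cases hk : 0 < ev k
        · conv_lhs => rw [show Qk k = ((ev k : ℝ) : ℂ)⁻¹ • (G k * (G k)ᴴ) from if_pos hk]
          rw [Matrix.mul_smul, ← Matrix.mul_assoc, hQkGk l k]
          by_cases hlk : l = k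
          · subst hlk
            rw [if_pos rfl, if_pos rfl]
            rw [show Qk l = ((ev l : ℝ) : ℂ)⁻¹ • (G l * (G l)ᴴ) from if_pos hk]
          · rw [if_neg hlk, if_neg hlk, Matrix.zero_mul, smul_zero]
        · rw [show Qk k = 0 from if_neg hk, Matrix.mul_zero]
          by_cases hlk : l = k
          · subst hlk
            rw [if_pos rfl, show Qk l = 0 from if_neg hk]
          · rw [if_neg hlk]
      have hQQ : Q * Q = Q := by
        rw [hQdef, Matrix.sum_mul]
        calc ∑ l, Qk l * ∑ k, Qk k = ∑ l, ∑ k, Qk l * Qk k := by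
              refine Finset.sum_congr rfl fun l _ => ?_
              rw [Matrix.mul_sum]
          _ = ∑ l, Qk l := by
              refine Finset.sum_congr rfl fun l _ => ?_
              rw [Finset.sum_congr rfl fun k _ => hQkQk l k]
              simp
      have hss : ∀ k, 0 < ev k → star (sq k) * sq k = ((ev k : ℝ) : ℂ)⁻¹ := by
        intro k hk
        rw [hsqdef]
        simp only
        rw [star_inv₀]
        have hst : star ((Real.sqrt (ev k) : ℝ) : ℂ) = ((Real.sqrt (ev k) : ℝ) : ℂ) := by
          rw [Complex.star_def, Complex.conj_ofReal]
        rw [hst, ← mul_inv]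
        congr 1
        rw [← Complex.ofReal_mul, Real.mul_self_sqrt (hevnn k)]
      have hRopQk : ∀ k, (Rop (some k))ᴴ * Rop (some k) = Qk k := by
        intro k
        by_cases hk : 0 < ev k
        · rw [show Rop (some k) = sq k • (G k)ᴴ from if_pos hk]
          rw [conjTranspose_smul, conjTranspose_conjTranspose, Matrix.smul_mul,
            Matrix.mul_smul, smul_smul, hss k hk]
          rw [show Qk k = ((ev k : ℝ) : ℂ)⁻¹ • (G k * (G k)ᴴ) from if_pos hk]
        · rw [show Rop (some k) = 0 from if_neg hk, show Qk k = 0 from if_neg hk]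
          simp
      have hRopSum : ∑ o : Option J, (Rop o)ᴴ * Rop o = 1 := by
        rw [Fintype.sum_option]
        have hnone : (Rop none)ᴴ * Rop none = 1 - Q := by
          show ((1 - Q)ᴴ) * (1 - Q) = 1 - Q
          rw [conjTranspose_sub, conjTranspose_one, hQH, Matrix.sub_mul, Matrix.one_mul,
            Matrix.mul_sub, Matrix.mul_one, hQQ, sub_self, sub_zero]
        rw [hnone, Finset.sum_congr rfl fun k _ => hRopQk k, ← hQdef]
        rw [sub_add_cancel]
      -- the recovery family indexed by Fin _
      refine ⟨Fintype.card (Option J),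
        fun i => Rop ((Fintype.equivFin (Option J)).symm i), ?_, ?_⟩
      · rw [Equiv.sum_comp (Fintype.equivFin (Option J)).symm fun o => (Rop o)ᴴ * Rop o]
        exact hRopSum
      · intro ρ hρ
        rw [Equiv.sum_comp (Fintype.equivFin (Option J)).symm
          fun o => ∑ j, Rop o * E j * ρ * (E j)ᴴ * (Rop o)ᴴ]
        have hGexp : ∀ k, G k * ρ * (G k)ᴴ
            = ∑ a, ∑ b, (U a k * star (U b k)) • (E a * ρ * (E b)ᴴ) := by
          intro k
          have hGk : G k = ∑ a, U a k • (E a * P) := by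
            simp only [hGdef, hFdef, Matrix.sum_mul, Matrix.smul_mul]
          have hGkH : (G k)ᴴ = ∑ b, star (U b k) • (P * (E b)ᴴ) := by
            rw [hGk]
            simp only [conjTranspose_sum, conjTranspose_smul, conjTranspose_mul, hP₁]
          rw [hGkH, hGk, Matrix.sum_mul, Matrix.sum_mul]
          refine Finset.sum_congr rfl fun a _ => ?_
          rw [Matrix.mul_sum]
          refine Finset.sum_congr rfl fun b _ => ?_
          rw [Matrix.smul_mul, Matrix.smul_mul, Matrix.mul_smul, smul_smul]
          congr 1
          rw [Matrix.mul_assoc (E a) P ρ, Matrix.mul_assoc (E a) (P * ρ) (P * (E b)ᴴ),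
            ← Matrix.mul_assoc (P * ρ) P ((E b)ᴴ), hρ, ← Matrix.mul_assoc]
        have hinner : ∑ k, G k * ρ * (G k)ᴴ = ∑ a, E a * ρ * (E a)ᴴ := by
          calc ∑ k, G k * ρ * (G k)ᴴ
              = ∑ a, ∑ b, (∑ k, U a k * star (U b k)) • (E a * ρ * (E b)ᴴ) := by
                simp only [hGexp]
                rw [Finset.sum_comm]
                refine Finset.sum_congr rfl fun a _ => ?_
                rw [Finset.sum_comm]
                refine Finset.sum_congr rfl fun b _ => ?_
                rw [Finset.sum_smul]
            _ = ∑ a, ∑ b, ((U * Uᴴ) a b) • (E a * ρ * (E b)ᴴ) := by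
                refine Finset.sum_congr rfl fun a _ => Finset.sum_congr rfl fun b _ => ?_
                congr 1
            _ = ∑ a, E a * ρ * (E a)ᴴ := by
                rw [hU2]
                refine Finset.sum_congr rfl fun a _ => ?_
                simp [Matrix.one_apply, ite_smul]
        have hXfact : ∀ X : Matrix (Fin d) (Fin d) ℂ,
            ∑ j, X * E j * ρ * (E j)ᴴ * Xᴴ = ∑ k, (X * G k) * ρ * (X * G k)ᴴ := by
          intro X
          calc ∑ j, X * E j * ρ * (E j)ᴴ * Xᴴ = X * (∑ j, E j * ρ * (E j)ᴴ) * Xᴴ := by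
                rw [Matrix.mul_sum, Matrix.sum_mul]
                exact Finset.sum_congr rfl fun j _ => by simp only [Matrix.mul_assoc]
            _ = X * (∑ k, G k * ρ * (G k)ᴴ) * Xᴴ := by rw [hinner]
            _ = ∑ k, (X * G k) * ρ * (X * G k)ᴴ := by
                rw [Matrix.mul_sum, Matrix.sum_mul]
                refine Finset.sum_congr rfl fun k _ => ?_
                rw [Matrix.conjTranspose_mul X (G k)]
                simp only [Matrix.mul_assoc]
        have hWsome : ∀ l k, Rop (some l) * G k
            = (if l = k ∧ 0 < ev k then ((Real.sqrt (ev k) : ℝ) : ℂ) else 0) • P := by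
          intro l k
          by_cases hl : 0 < ev l
          · rw [show Rop (some l) = sq l • (G l)ᴴ from if_pos hl, Matrix.smul_mul, hGc l k]
            by_cases hlk : l = k
            · subst hlk
              rw [if_pos rfl, if_pos (show l = l ∧ 0 < ev l from ⟨rfl, hl⟩), smul_smul]
              congr 1
              have hsqne : ((Real.sqrt (ev l) : ℝ) : ℂ) ≠ 0 :=
                Complex.ofReal_ne_zero.mpr (Real.sqrt_pos.mpr hl).ne'
              rw [hsqdef]
              simp only
              rw [inv_mul_eq_iff_eq_mul₀ hsqne, ← Complex.ofReal_mul,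
                Real.mul_self_sqrt (hevnn l)]
            · rw [if_neg hlk, if_neg (show ¬(l = k ∧ 0 < ev k) from fun h => hlk h.1)]
              simp
          · rw [show Rop (some l) = 0 from if_neg hl, Matrix.zero_mul]
            have hni : ¬ (l = k ∧ 0 < ev k) := by
              rintro ⟨rfl, hk⟩
              exact hl hk
            rw [if_neg hni, zero_smul]
        calc ∑ o : Option J, ∑ j, Rop o * E j * ρ * (E j)ᴴ * (Rop o)ᴴ
            = ∑ o : Option J, ∑ k, (Rop o * G k) * ρ * (Rop o * G k)ᴴ :=
              Finset.sum_congr rfl fun o _ => hXfact (Rop o)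
          _ = ρ := by
              rw [Fintype.sum_option]
              have hnone : ∑ k, (Rop none * G k) * ρ * (Rop none * G k)ᴴ = 0 := by
                refine Finset.sum_eq_zero fun k _ => ?_
                rw [show Rop none = 1 - Q from rfl, h1QG k]
                simp
              have hsome : ∀ l, ∑ k, (Rop (some l) * G k) * ρ * (Rop (some l) * G k)ᴴ
                  = if 0 < ev l then ((ev l : ℝ) : ℂ) • ρ else 0 := by
                intro l
                have hterm : ∀ k, (Rop (some l) * G k) * ρ * (Rop (some l) * G k)ᴴ
                    = if l = k ∧ 0 < ev k then ((ev k : ℝ) : ℂ) • ρ else 0 := by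
                  intro k
                  rw [hWsome l k]
                  by_cases h : l = k ∧ 0 < ev k
                  · rw [if_pos h, if_pos h, conjTranspose_smul, hP₁, Matrix.smul_mul,
                      Matrix.mul_smul, Matrix.smul_mul, smul_smul, hρ]
                    congr 1
                    rw [Complex.star_def, Complex.conj_ofReal, ← Complex.ofReal_mul,
                      Real.mul_self_sqrt (hevnn k)]
                  · rw [if_neg h, if_neg h, zero_smul, Matrix.zero_mul, Matrix.zero_mul]
                rw [Finset.sum_congr rfl fun k _ => hterm k]
                by_cases hl : 0 < ev l
                · rw [if_pos hl]
                  rw [Finset.sum_eq_single l]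
                  · rw [if_pos ⟨rfl, hl⟩]
                  · intro k _ hk
                    rw [if_neg]
                    rintro ⟨rfl, _⟩
                    exact hk rfl
                  · intro h
                    exact absurd (Finset.mem_univ l) h
                · rw [if_neg hl]
                  refine Finset.sum_eq_zero fun k _ => ?_
                  rw [if_neg]
                  rintro ⟨rfl, hk⟩
                  exact hl hk
              rw [hnone, zero_add, Finset.sum_congr rfl fun l _ => hsome l]
              have : ∑ l, (if 0 < ev l then ((ev l : ℝ) : ℂ) • ρ else 0)
                  = ∑ l, ((ev l : ℝ) : ℂ) • ρ := by
                refine Finset.sum_congr rfl fun l _ => ?_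
                by_cases hl : 0 < ev l
                · rw [if_pos hl]
                · rw [if_neg hl, le_antisymm (not_lt.mp hl) (hevnn l)]
                  simp
              rw [this, ← Finset.sum_smul]
              have hcast : (∑ l, ((ev l : ℝ) : ℂ)) = 1 := by
                have := congrArg (fun r : ℝ => (r : ℂ)) hsum1
                push_cast at this
                simpa using this
              rw [hcast, one_smul]
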